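/- Let 0 < α < 1 and s,t ≥ 0, and let ψ_t = 1_{[-t,t]}. Then ∫_ℝ ψ̂_t(x) conj(ψ̂_s(x)) |x|^α dx = K ((s+t)^{1-α} - |t-s|^{1-α}) for some constant K > 0 depending only on α, where ψ̂_t(x) = ∫_ℝ e^{ixy} ψ_t(y) dy. -/

import Mathlib

open MeasureTheory Real

/-- `ψ_t = 1_{[-t,t]}`. -/
noncomputable def psiEven (t : ℝ) : ℝ → ℝ :=
  fun y => Set.indicator (Set.Icc (-t) t) (fun _ => (1:ℝ)) y

/-- Fourier transform with the convention `f̂(x) = ∫ e^{ixy} f(y) dy`. -/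
noncomputable def hatF (f : ℝ → ℝ) (x : ℝ) : ℂ :=
  ∫ y : ℝ, Complex.exp (Complex.I * x * y) * (f y : ℂ)

noncomputable def hfun (α a : ℝ) (x : ℝ) : ℝ := (1 - Real.cos (a * |x|)) * |x| ^ (α - 2)

lemma hfun_nonneg (α a x : ℝ) : 0 ≤ hfun α a x :=
  mul_nonneg (by nlinarith [Real.cos_le_one (a * |x|)]) (Real.rpow_nonneg (abs_nonneg x) _)

lemma hfun_meas (α a : ℝ) : Measurable (hfun α a) := by
  unfold hfun
  exact ((measurable_const.sub ((measurable_const.mul measurable_abs).cos)).mul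
    (measurable_abs.pow_const _))

lemma hfun_integrable {α : ℝ} (hα : α ∈ Set.Ioo (0:ℝ) 1) (a : ℝ) : Integrable (hfun α a) := by
  obtain ⟨hα0, hα1⟩ := hα
  have h01 : IntegrableOn (hfun α a) (Set.Ioc 0 1) := by
    have hbound : IntegrableOn (fun x : ℝ => a^2 / 2 * x ^ α) (Set.Ioc 0 1) := by
      apply Integrable.const_mul
      exact (intervalIntegral.intervalIntegrable_rpow' (by linarith)).1
    refine Integrable.mono' hbound ((hfun_meas α a).aestronglyMeasurable.restrict) ?_
    filter_upwards [ae_restrict_mem measurableSet_Ioc] with x hx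
    have hx0 : (0:ℝ) < x := hx.1
    have habs : |x| = x := abs_of_pos hx0
    have hcos : 1 - Real.cos (a * |x|) ≤ (a * |x|)^2 / 2 := by
      nlinarith [Real.one_sub_sq_div_two_le_cos (x := a * |x|)]
    rw [Real.norm_eq_abs, abs_of_nonneg (hfun_nonneg α a x)]
    have hrp : x ^ (α - 2) * x ^ (2:ℝ) = x ^ α := by
      rw [← Real.rpow_add hx0]; norm_num
    have hx2 : x ^ (2:ℝ) = x^2 := by
      rw [show (2:ℝ) = ((2:ℕ):ℝ) by norm_num, Real.rpow_natCast]
    calc hfun α a x ≤ (a*|x|)^2/2 * |x| ^ (α-2) :=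
          mul_le_mul_of_nonneg_right hcos (Real.rpow_nonneg (abs_nonneg x) _)
      _ = a^2/2 * x^α := by
          rw [habs, mul_pow, ← hrp, hx2]; ring
  have h1i : IntegrableOn (hfun α a) (Set.Ioi 1) := by
    have hbound : IntegrableOn (fun x : ℝ => 2 * x ^ (α - 2)) (Set.Ioi 1) :=
      (integrableOn_Ioi_rpow_of_lt (by linarith) one_pos).const_mul 2
    refine Integrable.mono' hbound ((hfun_meas α a).aestronglyMeasurable.restrict) ?_
    filter_upwards [ae_restrict_mem measurableSet_Ioi] with x hx
    have hx0 : (0:ℝ) < x := lt_trans one_pos hx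
    rw [Real.norm_eq_abs, abs_of_nonneg (hfun_nonneg α a x), hfun, abs_of_pos hx0]
    have : 1 - Real.cos (a * x) ≤ 2 := by nlinarith [Real.neg_one_le_cos (a * x)]
    exact mul_le_mul_of_nonneg_right this (Real.rpow_nonneg hx0.le _)
  have hIoi : IntegrableOn (hfun α a) (Set.Ioi 0) := by
    have : Set.Ioc (0:ℝ) 1 ∪ Set.Ioi 1 = Set.Ioi 0 := Set.Ioc_union_Ioi_eq_Ioi (by norm_num)
    rw [← this]; exact h01.union h1i
  have hIic : IntegrableOn (hfun α a) (Set.Iic 0) := by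
    rw [← Measure.map_neg_eq_self (volume : Measure ℝ)]
    have m : MeasurableEmbedding fun x : ℝ => -x := (Homeomorph.neg ℝ).measurableEmbedding
    rw [m.integrableOn_map_iff]
    have : (hfun α a) ∘ (fun x : ℝ => -x) = hfun α a := by
      funext x; simp [hfun, Function.comp, abs_neg]
    rw [this]
    simp only [Set.neg_preimage, Set.neg_Iic, neg_zero]
    exact (integrableOn_Ici_iff_integrableOn_Ioi).mpr hIoi
  have := hIic.union hIoi
  rwa [Set.Iic_union_Ioi, integrableOn_univ] at this

lemma hfun_scale {α : ℝ} (hα : α ∈ Set.Ioo (0:ℝ) 1) {a : ℝ} (ha : 0 ≤ a) :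
    ∫ x, hfun α a x = a ^ (1 - α) * ∫ x, hfun α 1 x := by
  rcases eq_or_lt_of_le ha with h | h
  · have h0 : a = 0 := h.symm
    subst h0
    have : (fun x => hfun α 0 x) = fun _ : ℝ => (0:ℝ) := by
      funext x; simp [hfun]
    rw [this, integral_zero, Real.zero_rpow (by linarith [hα.2] : (1:ℝ) - α ≠ 0), zero_mul]
  · have hfe : ∀ x, hfun α a x = a ^ ((2:ℝ) - α) * hfun α 1 (a * x) := by
      intro x
      have habs : |a * x| = a * |x| := by rw [abs_mul, abs_of_pos h]
      rw [hfun, hfun, one_mul, habs]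
      have h1 : (a * |x|) ^ (α - 2) = a ^ (α-2) * |x| ^ (α-2) :=
        Real.mul_rpow h.le (abs_nonneg x)
      rw [h1]
      have h2 : a ^ ((2:ℝ) - α) * a ^ (α - 2) = 1 := by
        rw [← Real.rpow_add h]; norm_num
      calc (1 - Real.cos (a * |x|)) * |x| ^ (α-2)
          = (a ^ ((2:ℝ)-α) * a ^ (α-2)) * ((1 - Real.cos (a * |x|)) * |x| ^ (α-2)) := by
            rw [h2, one_mul]
        _ = a ^ ((2:ℝ)-α) * ((1 - Real.cos (a*|x|)) * (a ^ (α-2) * |x| ^ (α-2))) := by ring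
    simp_rw [hfe]
    rw [MeasureTheory.integral_const_mul]
    rw [Measure.integral_comp_mul_left (fun y => hfun α 1 y) a]
    rw [smul_eq_mul, abs_of_pos (inv_pos.mpr h), ← mul_assoc]
    congr 1
    rw [← Real.rpow_neg_one a, ← Real.rpow_add h]
    congr 1; ring

lemma C_pos {α : ℝ} (hα : α ∈ Set.Ioo (0:ℝ) 1) : 0 < ∫ x, hfun α 1 x := by
  have hint := hfun_integrable hα 1
  have key : (π/2) * π ^ (α - 2) ≤ ∫ x in Set.Icc (π/2) π, hfun α 1 x := by
    have hvol : (volume (Set.Icc (π/2) π)).toReal = π/2 := by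
      rw [Real.volume_Icc, ENNReal.toReal_ofReal (by linarith [pi_pos])]
      ring_nf
    have hle : ∀ x ∈ Set.Icc (π/2) π, π ^ (α-2) ≤ hfun α 1 x := by
      intro x hx
      have hx0 : (0:ℝ) < x := lt_of_lt_of_le (by linarith [pi_pos]) hx.1
      have habs : |x| = x := abs_of_pos hx0
      have hcos : Real.cos x ≤ 0 :=
        Real.cos_nonpos_of_pi_div_two_le_of_le hx.1 (by linarith [hx.2, pi_pos])
      have h1 : (1:ℝ) ≤ 1 - Real.cos (1 * |x|) := by rw [one_mul, habs]; linarith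
      have h2 : π ^ (α-2) ≤ |x| ^ (α-2) := by
        rw [habs]; exact Real.rpow_le_rpow_of_nonpos hx0 hx.2 (by linarith [hα.2])
      calc π ^ (α-2) ≤ |x| ^ (α-2) := h2
        _ = 1 * (|x| ^ (α-2)) := (one_mul _).symm
        _ ≤ hfun α 1 x := mul_le_mul_of_nonneg_right h1 (Real.rpow_nonneg (abs_nonneg x) _)
    calc (π/2) * π ^ (α-2) = (volume (Set.Icc (π/2) π)).toReal * π ^ (α-2) := by rw [hvol]
      _ ≤ ∫ x in Set.Icc (π/2) π, hfun α 1 x := by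
          rw [mul_comm]
          exact setIntegral_ge_of_const_le_real measurableSet_Icc
            (by rw [Real.volume_Icc]; exact ENNReal.ofReal_ne_top) hle hint.integrableOn
  have h2 : ∫ x in Set.Icc (π/2) π, hfun α 1 x ≤ ∫ x, hfun α 1 x :=
    setIntegral_le_integral hint (Filter.Eventually.of_forall (hfun_nonneg α 1))
  have hπ : 0 < (π/2) * π ^ (α-2) :=
    mul_pos (by linarith [pi_pos]) (Real.rpow_pos_of_pos pi_pos _)
  linarith

lemma hatF_eq (t : ℝ) (ht : 0 ≤ t) {x : ℝ} (hx : x ≠ 0) :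
    hatF (psiEven t) x = ((2 * Real.sin (t * x) / x : ℝ) : ℂ) := by
  have hxc : (x:ℂ) ≠ 0 := by exact_mod_cast hx
  have h1 : ∀ y : ℝ, Complex.exp (Complex.I * x * y) * ((psiEven t y : ℝ) : ℂ)
      = Set.indicator (Set.Icc (-t) t) (fun y => Complex.exp ((Complex.I * x) * y)) y := by
    intro y
    by_cases hy : y ∈ Set.Icc (-t) t
    · simp [psiEven, Set.indicator_of_mem hy, mul_assoc]
    · simp [psiEven, Set.indicator_of_notMem hy]
  have heq : hatF (psiEven t) x = ∫ y in Set.Icc (-t) t, Complex.exp ((Complex.I * x) * y) := by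
    rw [hatF]
    simp_rw [h1]
    rw [integral_indicator measurableSet_Icc]
  rw [heq, MeasureTheory.integral_Icc_eq_integral_Ioc,
    ← intervalIntegral.integral_of_le (by linarith : -t ≤ t),
    integral_exp_mul_complex (by simpa using hxc : Complex.I * x ≠ 0)]
  have e1 : Complex.I * x * t = ((x * t : ℝ) : ℂ) * Complex.I := by push_cast; ring
  have e2 : Complex.I * x * (-t : ℝ) = (-(x * t : ℝ) : ℂ) * Complex.I := by push_cast; ring
  rw [e1, e2, Complex.exp_mul_I, Complex.exp_mul_I, Complex.cos_neg, Complex.sin_neg]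
  field_simp
  push_cast
  field_simp
  ring

theorem stmt4 (α : ℝ) (hα : α ∈ Set.Ioo (0:ℝ) 1) :
    ∃ K : ℝ, 0 < K ∧ ∀ s t : ℝ, 0 ≤ s → 0 ≤ t →
      (∫ x : ℝ, hatF (psiEven t) x * (starRingEnd ℂ) (hatF (psiEven s) x) * (|x| ^ α : ℝ))
      = ((K * ((s + t) ^ (1-α) - |t - s| ^ (1-α)) : ℝ) : ℂ) := by
  obtain ⟨hα0, hα1⟩ := hα
  have hαm : α ∈ Set.Ioo (0:ℝ) 1 := ⟨hα0, hα1⟩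
  set C : ℝ := ∫ x, hfun α 1 x with hC
  refine ⟨2 * C, mul_pos two_pos (C_pos hαm), ?_⟩
  intro s t hs ht
  set g : ℝ → ℝ := fun x => 2 * (hfun α (s+t) x - hfun α |t-s| x) with hg
  have h0 : ∀ᵐ x : ℝ, x ≠ 0 := by
    rw [ae_iff]
    simp only [not_not, Set.setOf_eq_eq_singleton]
    exact Real.volume_singleton
  have hae : ∀ᵐ x : ℝ, hatF (psiEven t) x * (starRingEnd ℂ) (hatF (psiEven s) x)
      * ((|x| ^ α : ℝ) : ℂ) = ((g x : ℝ) : ℂ) := by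
    filter_upwards [h0] with x hx
    rw [hatF_eq t ht hx, hatF_eq s hs hx, Complex.conj_ofReal,
      ← Complex.ofReal_mul, ← Complex.ofReal_mul]
    congr 1
    have hx0 : (0:ℝ) < |x| := abs_pos.mpr hx
    have hxa : |x| ^ (α-2) * x^2 = |x| ^ α := by
      have hsq : x^2 = |x| ^ (2:ℝ) := by
        rw [show ((2:ℝ)) = ((2:ℕ):ℝ) by norm_num, Real.rpow_natCast, sq_abs]
      rw [hsq, ← Real.rpow_add hx0]; norm_num
    have hc1 : Real.cos ((s+t) * |x|) = Real.cos (t*x + s*x) := by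
      rw [show (s + t) * |x| = |(s + t) * x| by rw [abs_mul, abs_of_nonneg (by linarith : (0:ℝ) ≤ s+t)],
        Real.cos_abs]
      ring_nf
    have hc2 : Real.cos (|t-s| * |x|) = Real.cos (t*x - s*x) := by
      rw [show |t - s| * |x| = |(t - s) * x| from (abs_mul _ _).symm, Real.cos_abs]
      ring_nf
    have trig : Real.cos (t*x - s*x) - Real.cos (t*x + s*x)
        = 2 * Real.sin (t*x) * Real.sin (s*x) := by
      rw [Real.cos_sub, Real.cos_add]; ring
    simp only [hg, hfun, hc1, hc2]
    rw [← hxa]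
    field_simp
    rw [show x * (t + s) = t*x + s*x by ring, show x * (t - s) = t*x - s*x by ring,
      show x * s = s * x by ring]
    linear_combination (-1) * trig
  have hofr : ∫ a : ℝ, ((g a : ℝ) : ℂ) = (((∫ a : ℝ, g a) : ℝ) : ℂ) := integral_ofReal (𝕜 := ℂ)
  rw [integral_congr_ae hae, hofr]
  norm_cast
  have hi1 := hfun_integrable hαm (s+t)
  have hi2 := hfun_integrable hαm |t-s|
  have hsplit : ∫ x, g x = 2 * ((∫ x, hfun α (s+t) x) - ∫ x, hfun α |t-s| x) := by
    rw [hg]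
    rw [MeasureTheory.integral_const_mul, integral_sub hi1 hi2]
  rw [hsplit, hfun_scale hαm (by linarith : (0:ℝ) ≤ s + t), hfun_scale hαm (abs_nonneg (t-s))]
  ring
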